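/- Let X be an abelian Polish group. Every Borel set A ⊆ X belonging to F(X) (i.e., such that for every compact set K ⊆ X there exists x ∈ X with K + x ⊆ A) is not Haar meager in X. -/

import Mathlib

open MeasureTheory Set

/-- A set in a topological abelian group is *Haar meager* if there is a Borel set `B ⊇ A`,
a nonempty compact metric space `K` and a continuous `f : K → G` such that `f ⁻¹' (B + x)`
is meager in `K` for every `x ∈ G`. -/
def IsHaarMeager {G : Type*} [TopologicalSpace G] [AddCommGroup G] (A : Set G) : Prop :=
  ∃ B : Set G, A ⊆ B ∧ MeasurableSet[borel G] B ∧
    ∃ (K : Type) (_ : MetricSpace K) (_ : CompactSpace K) (_ : Nonempty K) (f : K → G),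
      Continuous f ∧ ∀ x : G, IsMeagre (f ⁻¹' ((fun b => b + x) '' B))

/-- A set in a topological abelian group is *Haar null* if there is a Borel probability
measure `μ` and a Borel set `B ⊇ A` with `μ (x + B) = 0` for every `x ∈ G`. -/
def IsHaarNull {G : Type*} [TopologicalSpace G] [AddCommGroup G] (A : Set G) : Prop :=
  ∃ μ : @Measure G (borel G), @IsProbabilityMeasure G (borel G) μ ∧
    ∃ B : Set G, A ⊆ B ∧ MeasurableSet[borel G] B ∧
      ∀ x : G, μ ((fun b => x + b) '' B) = 0

/-- In an abelian Polish group, a Borel set `A` such that every compact set admits a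
translate inside `A` is not Haar meager. -/
theorem not_haarMeager_of_mem_F {X : Type*}
    [TopologicalSpace X] [AddCommGroup X] [IsTopologicalAddGroup X] [PolishSpace X]
    (A : Set X) (hA : MeasurableSet[borel X] A)
    (hAF : ∀ K : Set X, IsCompact K → ∃ x : X, (fun k => k + x) '' K ⊆ A) :
    ¬ IsHaarMeager A := by
  rintro ⟨B, hAB, -, K, _, _, _, f, hf, hmeager⟩
  obtain ⟨x, hx⟩ := hAF (Set.range f) (isCompact_range hf)
  have hall : (f ⁻¹' ((fun b => b + (-x)) '' B)) = univ := by
    ext k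
    simp only [mem_preimage, mem_univ, iff_true, mem_image]
    exact ⟨f k + x, hAB (hx ⟨f k, mem_range_self k, rfl⟩), by abel⟩
  have := hmeager (-x)
  rw [hall] at this
  unfold IsMeagre at this
  rw [compl_univ] at this
  have hdense := dense_of_mem_residual this
  obtain ⟨k⟩ := ‹Nonempty K›
  exact absurd (hdense.nonempty.mono (subset_refl _)) (by simp)
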